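/- For any meet semilattice M, there is an embedding of M into a complete Boolean algebra that preserves all existing finite meets and all existing exact joins. -/

import Mathlib

open Heyting

variable {F : Type*} [Order.Frame F]

namespace Heyting.Regular

noncomputable instance completeLattice : CompleteLattice (Regular F) :=
  { (inferInstance : Lattice (Regular F)), (inferInstance : BoundedOrder (Regular F)) with
    sSup := fun s => ⟨(sSup (val '' s))ᶜᶜ, isRegular_compl _⟩
    sInf := fun s => ⟨sInf (val '' s), by
      refine le_antisymm (le_sInf ?_) le_compl_compl
      rintro _ ⟨a, ha, rfl⟩
      exact (compl_le_compl (compl_le_compl (sInf_le (Set.mem_image_of_mem _ ha)))).trans_eq a.2⟩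
    isLUB_sSup := fun s => ⟨fun a ha => Heyting.Regular.coe_le_coe.1
      ((le_sSup (Set.mem_image_of_mem _ ha)).trans le_compl_compl),
    fun a h => by
      refine Heyting.Regular.coe_le_coe.1
        (le_trans (compl_le_compl (compl_le_compl (sSup_le ?_))) a.2.le)
      rintro _ ⟨b, hb, rfl⟩; exact h hb⟩
    isGLB_sInf := fun s => ⟨fun a ha => Heyting.Regular.coe_le_coe.1 (sInf_le (Set.mem_image_of_mem _ ha)),
    fun a h => Heyting.Regular.coe_le_coe.1 (le_sInf (by rintro _ ⟨b, hb, rfl⟩; exact Heyting.Regular.coe_le_coe.2 (h hb)))⟩ }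

@[simp] theorem coe_sSup (s : Set (Regular F)) :
    ((sSup s : Regular F) : F) = (sSup (val '' s))ᶜᶜ := rfl

noncomputable instance completeBooleanAlgebra : CompleteBooleanAlgebra (Regular F) :=
  { (inferInstance : BooleanAlgebra (Regular F)),
    (inferInstance : CompleteLattice (Regular F)) with }

end Heyting.Regular

variable {X : Type*} [Order.Frame X]

structure Nucl (X : Type*) [Order.Frame X] where
  toFun : X → X
  le_apply' : ∀ x, x ≤ toFun x
  idem' : ∀ x, toFun (toFun x) ≤ toFun x
  map_inf' : ∀ x y, toFun (x ⊓ y) = toFun x ⊓ toFun y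

namespace Nucl

instance : FunLike (Nucl X) X X where
  coe := toFun
  coe_injective := by rintro ⟨f, _, _, _⟩ ⟨g, _, _, _⟩ h; simpa using h

@[ext] theorem ext {j k : Nucl X} (h : ∀ x, j x = k x) : j = k := DFunLike.ext _ _ h

theorem le_apply (j : Nucl X) (x : X) : x ≤ j x := j.le_apply' x
theorem idem (j : Nucl X) (x : X) : j (j x) ≤ j x := j.idem' x
theorem map_inf (j : Nucl X) (x y : X) : j (x ⊓ y) = j x ⊓ j y := j.map_inf' x y
theorem mono (j : Nucl X) {x y : X} (h : x ≤ y) : j x ≤ j y := by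
  have : j (x ⊓ y) = j x ⊓ j y := j.map_inf x y
  rw [inf_eq_left.2 h] at this
  rw [this]; exact inf_le_right

instance : PartialOrder (Nucl X) := PartialOrder.lift toFun fun j k h => by
  cases j; cases k; simpa using h

theorem le_def {j k : Nucl X} : j ≤ k ↔ ∀ x, j x ≤ k x := Iff.rfl

instance : InfSet (Nucl X) where
  sInf s :=
    { toFun := fun x => ⨅ j : s, (j : Nucl X) x
      le_apply' := fun x => le_iInf fun j => (j : Nucl X).le_apply x
      idem' := fun x => le_iInf fun j => by
        refine (iInf_le _ j).trans ?_
        exact ((j : Nucl X).mono (iInf_le _ j)).trans ((j : Nucl X).idem x)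
      map_inf' := fun x y => by
        simp_rw [fun j : s => (j : Nucl X).map_inf x y]
        exact iInf_inf_eq }

theorem sInf_apply (s : Set (Nucl X)) (x : X) : sInf s x = ⨅ j : s, (j : Nucl X) x := rfl

theorem isGLB_sInf (s : Set (Nucl X)) : IsGLB s (sInf s) := by
  constructor
  · exact fun j hj => le_def.2 fun x => iInf_le (fun k : s => (k : Nucl X) x) ⟨j, hj⟩
  · exact fun k hk => le_def.2 fun x => le_iInf fun j => hk j.2 x

instance : Min (Nucl X) :=
  ⟨fun j k =>
    { toFun := fun x => j x ⊓ k x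
      le_apply' := fun x => le_inf (j.le_apply x) (k.le_apply x)
      idem' := fun x =>
        inf_le_inf ((j.mono inf_le_left).trans (j.idem x)) ((k.mono inf_le_right).trans (k.idem x))
      map_inf' := fun x y => by show j (x ⊓ y) ⊓ k (x ⊓ y) = (j x ⊓ k x) ⊓ (j y ⊓ k y); rw [j.map_inf, k.map_inf, inf_inf_inf_comm] }⟩

theorem inf_apply (j k : Nucl X) (x : X) : (j ⊓ k) x = j x ⊓ k x := rfl

noncomputable instance : CompleteLattice (Nucl X) :=
  { completeLatticeOfInf _ isGLB_sInf with
    inf := fun j k => j ⊓ k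
    le_inf := fun a j k h1 h2 => le_def.2 fun x => le_inf (h1 x) (h2 x)
    inf_le_left := fun j k => le_def.2 fun x => inf_le_left
    inf_le_right := fun j k => le_def.2 fun x => inf_le_right }

/-- The identity nucleus. -/
def idN : Nucl X := ⟨id, fun _ => le_rfl, fun _ => le_rfl, fun _ _ => rfl⟩

theorem idN_apply (x : X) : (idN : Nucl X) x = x := rfl

theorem bot_eq_idN : (⊥ : Nucl X) = idN :=
  le_antisymm bot_le (le_def.2 fun x => Nucl.le_apply _ x)

theorem bot_apply (x : X) : (⊥ : Nucl X) x = x := by rw [bot_eq_idN]; rfl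

/-- Heyting implication of nuclei. -/
noncomputable def himpN (j k : Nucl X) : Nucl X where
  toFun x := ⨅ b : {b : X // x ≤ b}, (j b.1 ⇨ k b.1)
  le_apply' x := le_iInf fun b => le_himp_iff.2 (inf_le_left.trans (b.2.trans (k.le_apply b.1)))
  map_inf' x y := by
    refine le_antisymm (le_inf ?_ ?_) (le_iInf fun b => le_himp_iff.2 ?_)
    · exact le_iInf fun b => iInf_le _ (⟨b.1, inf_le_left.trans b.2⟩ : {c : X // x ⊓ y ≤ c})
    · exact le_iInf fun b => iInf_le _ (⟨b.1, inf_le_right.trans b.2⟩ : {c : X // x ⊓ y ≤ c})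
    · -- b : {b // x ⊓ y ≤ b}
      have h1 : (⨅ b : {b : X // x ≤ b}, (j b.1 ⇨ k b.1)) ≤ j (x ⊔ b.1) ⇨ k (x ⊔ b.1) :=
        iInf_le _ (⟨x ⊔ b.1, le_sup_left⟩ : {c : X // x ≤ c})
      have h2 : (⨅ b : {b : X // y ≤ b}, (j b.1 ⇨ k b.1)) ≤ j (y ⊔ b.1) ⇨ k (y ⊔ b.1) :=
        iInf_le _ (⟨y ⊔ b.1, le_sup_left⟩ : {c : X // y ≤ c})
      have hjb1 : j b.1 ≤ j (x ⊔ b.1) := j.mono le_sup_right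
      have hjb2 : j b.1 ≤ j (y ⊔ b.1) := j.mono le_sup_right
      have key : ((⨅ b : {b : X // x ≤ b}, (j b.1 ⇨ k b.1)) ⊓
          (⨅ b : {b : X // y ≤ b}, (j b.1 ⇨ k b.1))) ⊓ j b.1
          ≤ k (x ⊔ b.1) ⊓ k (y ⊔ b.1) := by
        refine le_inf ?_ ?_
        · calc _ ≤ (j (x ⊔ b.1) ⇨ k (x ⊔ b.1)) ⊓ j (x ⊔ b.1) :=
                inf_le_inf (inf_le_left.trans h1) hjb1
            _ ≤ _ := himp_inf_le
        · calc _ ≤ (j (y ⊔ b.1) ⇨ k (y ⊔ b.1)) ⊓ j (y ⊔ b.1) :=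
                inf_le_inf (inf_le_right.trans h2) hjb2
            _ ≤ _ := himp_inf_le
      refine key.trans ?_
      rw [← k.map_inf, ← sup_inf_right, sup_eq_right.2 b.2]
  idem' x := by
    refine le_iInf fun b => le_himp_iff.2 ?_
    set H : X := ⨅ b : {b : X // x ≤ b}, (j b.1 ⇨ k b.1) with hH
    have h1 : (⨅ c : {c : X // H ≤ c}, (j c.1 ⇨ k c.1)) ≤ j (b.1 ⊔ H) ⇨ k (b.1 ⊔ H) :=
      iInf_le _ (⟨b.1 ⊔ H, le_sup_right⟩ : {c : X // H ≤ c})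
    have hHb : H ≤ j b.1 ⇨ k b.1 := iInf_le _ b
    have hX : (b.1 ⊔ (j b.1 ⇨ k b.1)) ⊓ j b.1 ≤ k b.1 := by
      rw [inf_sup_right]
      exact sup_le (inf_le_left.trans (k.le_apply b.1)) himp_inf_le
    have hXle : b.1 ⊔ (j b.1 ⇨ k b.1) ≤ j b.1 ⇨ k b.1 := le_himp_iff.2 hX
    have s1 : (⨅ c : {c : X // H ≤ c}, (j c.1 ⇨ k c.1)) ⊓ j b.1 ≤ k (b.1 ⊔ H) := by
      calc (⨅ c : {c : X // H ≤ c}, (j c.1 ⇨ k c.1)) ⊓ j b.1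
          ≤ (j (b.1 ⊔ H) ⇨ k (b.1 ⊔ H)) ⊓ j (b.1 ⊔ H) :=
            inf_le_inf h1 (j.mono le_sup_left)
        _ ≤ _ := himp_inf_le
    have s2 : (⨅ c : {c : X // H ≤ c}, (j c.1 ⇨ k c.1)) ⊓ j b.1 ≤ k (j b.1 ⇨ k b.1) :=
      s1.trans (k.mono ((sup_le_sup_left hHb b.1).trans hXle))
    calc (⨅ c : {c : X // H ≤ c}, (j c.1 ⇨ k c.1)) ⊓ j b.1
        ≤ k (j b.1 ⇨ k b.1) ⊓ j b.1 := le_inf s2 inf_le_right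
      _ ≤ k (j b.1 ⇨ k b.1) ⊓ k (j b.1) := inf_le_inf_left _ (k.le_apply _)
      _ = k ((j b.1 ⇨ k b.1) ⊓ j b.1) := (k.map_inf _ _).symm
      _ ≤ k (k b.1) := k.mono himp_inf_le
      _ ≤ k b.1 := k.idem _



theorem himpN_apply (j k : Nucl X) (x : X) :
    himpN j k x = ⨅ b : {b : X // x ≤ b}, (j b.1 ⇨ k b.1) := rfl

theorem le_himpN_iff {m j k : Nucl X} : m ≤ himpN j k ↔ m ⊓ j ≤ k := by
  constructor
  · intro h
    refine le_def.2 fun x => ?_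
    rw [inf_apply]
    have h2 : himpN j k x ≤ j x ⇨ k x := by
      rw [himpN_apply]; exact iInf_le (fun b : {b : X // x ≤ b} => j b.1 ⇨ k b.1) ⟨x, le_rfl⟩
    calc m x ⊓ j x ≤ himpN j k x ⊓ j x := inf_le_inf_right _ (h x)
      _ ≤ (j x ⇨ k x) ⊓ j x := inf_le_inf_right _ h2
      _ ≤ k x := himp_inf_le
  · intro h
    refine le_def.2 fun x => le_iInf fun b => le_himp_iff.2 ?_
    calc m x ⊓ j b.1 ≤ m b.1 ⊓ j b.1 := inf_le_inf_right _ (m.mono b.2)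
      _ = (m ⊓ j) b.1 := (inf_apply m j b.1).symm
      _ ≤ k b.1 := h b.1

noncomputable instance : Order.Frame (Nucl X) :=
  Order.Frame.ofMinimalAxioms
    { inf_sSup_le_iSup_inf := fun j s => by
        set t := ⨆ k ∈ s, j ⊓ k with ht
        have h1 : sSup s ≤ himpN j t := by
          refine sSup_le fun k hk => le_himpN_iff.2 ?_
          rw [inf_comm]
          exact le_iSup₂ (f := fun c (_ : c ∈ s) => j ⊓ c) k hk
        calc j ⊓ sSup s ≤ j ⊓ himpN j t := inf_le_inf_left _ h1
          _ = himpN j t ⊓ j := inf_comm _ _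
          _ ≤ t := le_himpN_iff.1 le_rfl }

/-- Closed nucleus. -/
def cN (x : X) : Nucl X where
  toFun y := x ⊔ y
  le_apply' y := le_sup_right
  idem' y := sup_le le_sup_left le_rfl
  map_inf' y z := sup_inf_left x y z

@[simp] theorem cN_apply (x y : X) : cN x y = x ⊔ y := rfl

/-- Open nucleus. -/
def oN (x : X) : Nucl X where
  toFun y := x ⇨ y
  le_apply' y := le_himp
  idem' y := (himp_himp x x y).le.trans (by rw [inf_idem])
  map_inf' y z := himp_inf_distrib x y z

@[simp] theorem oN_apply (x y : X) : oN x y = x ⇨ y := rfl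

theorem cN_le_cN_iff {x y : X} : cN x ≤ cN y ↔ x ≤ y := by
  constructor
  · intro h
    have := le_def.1 h ⊥
    simpa using this
  · intro h
    exact le_def.2 fun z => sup_le_sup_right h z

theorem cN_inf (x y : X) : cN (x ⊓ y) = cN x ⊓ cN y := by
  ext z
  rw [inf_apply]
  exact sup_inf_right x y z

theorem cN_top : cN (⊤ : X) = ⊤ := by
  refine le_antisymm le_top (le_def.2 fun y => ?_)
  simp

theorem cN_sSup (s : Set X) : cN (sSup s) = sSup (cN '' s) := by
  refine le_antisymm (le_def.2 fun y => ?_) (sSup_le ?_)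
  · refine sup_le (sSup_le fun x hx => ?_) ((sSup (cN '' s)).le_apply y)
    have hle : cN x ≤ sSup (cN '' s) := le_sSup (Set.mem_image_of_mem _ hx)
    exact le_sup_left.trans (hle y)
  · rintro _ ⟨x, hx, rfl⟩
    exact cN_le_cN_iff.2 (le_sSup hx)

theorem compl_cN (x : X) : (cN x)ᶜ = oN x := by
  refine le_antisymm ?_ ?_
  · have h : (cN x)ᶜ ⊓ cN x ≤ ⊥ := disjoint_compl_left.le_bot
    refine le_def.2 fun y => le_himp_iff.2 ?_
    calc (cN x)ᶜ y ⊓ x ≤ (cN x)ᶜ y ⊓ cN x y := inf_le_inf_left _ (by simp : x ≤ cN x y)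
      _ = ((cN x)ᶜ ⊓ cN x) y := (inf_apply _ _ y).symm
      _ ≤ (⊥ : Nucl X) y := h y
      _ = y := bot_apply y
  · rw [← himp_bot, le_himp_iff]
    refine le_def.2 fun y => ?_
    rw [inf_apply, bot_apply, oN_apply, cN_apply, inf_sup_left]
    exact sup_le himp_inf_le inf_le_right

theorem compl_oN (x : X) : (oN x)ᶜ = cN x := by
  refine le_antisymm ?_ ?_
  · have h : (oN x)ᶜ ⊓ oN x ≤ ⊥ := disjoint_compl_left.le_bot
    refine le_def.2 fun y => ?_
    have h1 : (oN x)ᶜ (x ⊔ y) ⊓ oN x (x ⊔ y) ≤ x ⊔ y := by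
      calc (oN x)ᶜ (x ⊔ y) ⊓ oN x (x ⊔ y) = ((oN x)ᶜ ⊓ oN x) (x ⊔ y) :=
            (inf_apply _ _ _).symm
        _ ≤ (⊥ : Nucl X) (x ⊔ y) := h (x ⊔ y)
        _ = x ⊔ y := bot_apply _
    have h2 : oN x (x ⊔ y) = ⊤ := by
      rw [oN_apply]
      exact top_le_iff.1 (le_himp_iff.2 (inf_le_right.trans le_sup_left))
    rw [h2, inf_top_eq] at h1
    exact ((oN x)ᶜ.mono le_sup_right).trans h1
  · rw [← himp_bot, le_himp_iff]
    refine le_def.2 fun y => ?_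
    rw [inf_apply, bot_apply, oN_apply, cN_apply, inf_sup_right]
    exact sup_le (by rw [inf_himp]; exact inf_le_right) inf_le_left

theorem isRegular_cN (x : X) : Heyting.IsRegular (cN x) := by
  rw [Heyting.IsRegular, compl_cN, compl_oN]

end Nucl

universe u

variable {M : Type u} [SemilatticeInf M]

/-- An exact join: a supremum preserved by all binary meets. -/
def ExactLUB (S : Set M) (m : M) : Prop :=
  IsLUB S m ∧ ∀ a : M, IsLUB ((fun s => a ⊓ s) '' S) (a ⊓ m)

theorem ExactLUB.inf_left {S : Set M} {m : M} (h : ExactLUB S m) (u : M) (hu : u ≤ m) :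
    ExactLUB ((fun s => u ⊓ s) '' S) u := by
  have him : ∀ a : M, (fun s => a ⊓ s) '' ((fun s => u ⊓ s) '' S)
      = (fun s => (a ⊓ u) ⊓ s) '' S := by
    intro a
    rw [Set.image_image]
    exact Set.image_congr fun s _ => (inf_assoc a u s).symm
  constructor
  · have := h.2 u
    rwa [inf_eq_left.2 hu] at this
  · intro a
    rw [him a]
    have hx : a ⊓ u = (a ⊓ u) ⊓ m := (inf_eq_left.2 (inf_le_right.trans hu)).symm
    have h2 := h.2 (a ⊓ u)
    rwa [← hx] at h2

/-- Exact ideals: down-closed and closed under exact joins. -/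
def IsExactIdeal (I : Set M) : Prop :=
  (∀ ⦃x y : M⦄, x ≤ y → y ∈ I → x ∈ I) ∧
    ∀ ⦃S : Set M⦄, S ⊆ I → ∀ ⦃m : M⦄, ExactLUB S m → m ∈ I

/-- The collection of exact ideals. -/
def ExIdl (M : Type u) [SemilatticeInf M] : Type u := {I : Set M // IsExactIdeal I}

namespace ExIdl

instance : PartialOrder (ExIdl M) := Subtype.partialOrder _

theorem le_def {I J : ExIdl M} : I ≤ J ↔ I.1 ⊆ J.1 := Iff.rfl

instance : InfSet (ExIdl M) where
  sInf s := ⟨⋂ I ∈ s, (I : ExIdl M).1,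
    ⟨fun x y hxy hy => Set.mem_iInter₂.2 fun I hI => I.2.1 hxy (Set.mem_iInter₂.1 hy I hI),
     fun S hS m hm => Set.mem_iInter₂.2 fun I hI =>
       I.2.2 (fun x hx => Set.mem_iInter₂.1 (hS hx) I hI) hm⟩⟩

theorem isGLB_sInf (s : Set (ExIdl M)) : IsGLB s (sInf s) := by
  constructor
  · intro I hI
    exact le_def.2 fun x hx => Set.mem_iInter₂.1 hx I hI
  · intro J hJ
    exact le_def.2 fun x hx => Set.mem_iInter₂.2 fun I hI => hJ hI hx

noncomputable instance : CompleteLattice (ExIdl M) := completeLatticeOfInf _ isGLB_sInf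

theorem mem_inf {I J : ExIdl M} {x : M} : x ∈ (I ⊓ J).1 ↔ x ∈ I.1 ∧ x ∈ J.1 := by
  have h : I ⊓ J = sInf ({I, J} : Set (ExIdl M)) := rfl
  rw [h]
  show x ∈ ⋂ K ∈ ({I, J} : Set (ExIdl M)), (K : ExIdl M).1 ↔ _
  simp

noncomputable instance : Order.Frame (ExIdl M) :=
  Order.Frame.ofMinimalAxioms
    { inf_sSup_le_iSup_inf := fun U s => by
        set C := ⨆ V ∈ s, U ⊓ V with hC
        set W : Set M := {x | ∀ u, u ∈ U.1 → u ≤ x → u ∈ C.1} with hW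
        have hWex : IsExactIdeal W := by
          constructor
          · intro x y hxy hy u hu hux
            exact hy u hu (hux.trans hxy)
          · intro S hS m hm u hu hum
            refine C.2.2 (S := (fun s => u ⊓ s) '' S) ?_ (hm.inf_left u hum)
            rintro _ ⟨t, ht, rfl⟩
            exact hS ht (u ⊓ t) (U.2.1 inf_le_left hu) inf_le_right
        have hub : ∀ V ∈ s, V ≤ (⟨W, hWex⟩ : ExIdl M) := by
          intro V hV
          refine le_def.2 fun x hx u hu hux => ?_
          have h1 : U ⊓ V ≤ C := le_iSup₂ (f := fun V (_ : V ∈ s) => U ⊓ V) V hV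
          exact le_def.1 h1 (mem_inf.2 ⟨hu, V.2.1 hux hx⟩)
        have hsSup : sSup s ≤ ⟨W, hWex⟩ := sSup_le hub
        refine le_def.2 fun x hx => ?_
        have hx1 := mem_inf.1 hx
        exact le_def.1 hsSup hx1.2 x hx1.1 le_rfl }

/-- Principal exact ideal. -/
def dn (a : M) : ExIdl M :=
  ⟨{x | x ≤ a}, fun x y hxy hy => hxy.trans hy,
    fun S hS m hm => hm.1.2 fun s hs => hS hs⟩

theorem mem_dn {a x : M} : x ∈ (dn a).1 ↔ x ≤ a := Iff.rfl

theorem dn_le_dn_iff {a b : M} : dn a ≤ dn b ↔ a ≤ b :=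
  ⟨fun h => h (le_refl a), fun h x hx => le_trans hx h⟩

theorem dn_inf (a b : M) : dn (a ⊓ b) = dn a ⊓ dn b := by
  apply le_antisymm
  · exact le_def.2 fun x hx => mem_inf.2 ⟨hx.trans inf_le_left, hx.trans inf_le_right⟩
  · exact le_def.2 fun x hx => le_inf (mem_inf.1 hx).1 (mem_inf.1 hx).2

theorem dn_isTop {m : M} (hm : IsTop m) : dn m = ⊤ :=
  le_antisymm le_top (le_def.2 fun x _ => hm x)

theorem dn_exactLUB {S : Set M} {m : M} (h : ExactLUB S m) :
    dn m = sSup (dn '' S) := by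
  apply le_antisymm
  · refine le_def.2 fun x hx => ?_
    refine (sSup (dn '' S)).2.2 (S := (fun s => x ⊓ s) '' S) ?_ (h.inf_left x hx)
    rintro _ ⟨t, ht, rfl⟩
    have : dn t ≤ sSup (dn '' S) := le_sSup (Set.mem_image_of_mem _ ht)
    exact le_def.1 this (inf_le_right : x ⊓ t ≤ t)
  · refine sSup_le ?_
    rintro _ ⟨t, ht, rfl⟩
    exact dn_le_dn_iff.2 (h.1.1 ht)

end ExIdl

/-- Funayama for meet semilattices: every meet semilattice embeds
into a complete Boolean algebra by a map that is order-preserving and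
order-reflecting (hence injective), preserves all existing finite meets
(binary meets, and the top element whenever it exists), and preserves all
existing exact joins. -/
theorem funayama_meet_semilattice (M : Type u) [SemilatticeInf M] :
    ∃ (B : Type u) (inst : CompleteBooleanAlgebra B) (e : M → B),
      (∀ a b : M, a ≤ b ↔ inst.le (e a) (e b)) ∧
      (∀ a b : M, e (a ⊓ b) = inst.inf (e a) (e b)) ∧
      (∀ m : M, IsTop m → e m = inst.top) ∧
      (∀ (S : Set M) (m : M), IsLUB S m →
        (∀ a : M, IsLUB ((fun s => a ⊓ s) '' S) (a ⊓ m)) →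
        e m = inst.sSup (e '' S)) := by
  classical
  refine ⟨Heyting.Regular (Nucl (ExIdl M)), inferInstance,
    fun a => ⟨Nucl.cN (ExIdl.dn a), Nucl.isRegular_cN _⟩, ?_, ?_, ?_, ?_⟩
  · intro a b
    show a ≤ b ↔ (⟨Nucl.cN (ExIdl.dn a), _⟩ : Heyting.Regular (Nucl (ExIdl M)))
      ≤ ⟨Nucl.cN (ExIdl.dn b), _⟩
    refine Iff.trans ?_ Heyting.Regular.coe_le_coe
    show a ≤ b ↔ Nucl.cN (ExIdl.dn a) ≤ Nucl.cN (ExIdl.dn b)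
    rw [Nucl.cN_le_cN_iff, ExIdl.dn_le_dn_iff]
  · intro a b
    apply Subtype.ext
    show Nucl.cN (ExIdl.dn (a ⊓ b)) = Nucl.cN (ExIdl.dn a) ⊓ Nucl.cN (ExIdl.dn b)
    rw [ExIdl.dn_inf, Nucl.cN_inf]
  · intro m hm
    show _ = (⊤ : Heyting.Regular (Nucl (ExIdl M)))
    apply Subtype.ext
    show Nucl.cN (ExIdl.dn m) = (⊤ : Nucl (ExIdl M))
    rw [ExIdl.dn_isTop hm, Nucl.cN_top]
  · intro S m h1 h2
    apply Subtype.ext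
    show Nucl.cN (ExIdl.dn m)
      = (sSup (Heyting.Regular.val '' ((fun a => (⟨Nucl.cN (ExIdl.dn a),
          Nucl.isRegular_cN _⟩ : Heyting.Regular (Nucl (ExIdl M)))) '' S)))ᶜᶜ
    erw [Set.image_image]
    have him : (fun a => Heyting.Regular.val (⟨Nucl.cN (ExIdl.dn a),
        Nucl.isRegular_cN _⟩ : Heyting.Regular (Nucl (ExIdl M)))) '' S
        = Nucl.cN '' (ExIdl.dn '' S) := by
      rw [Set.image_image]
      rfl
    rw [him, ← Nucl.cN_sSup, ← ExIdl.dn_exactLUB ⟨h1, h2⟩]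
    exact (Nucl.isRegular_cN (ExIdl.dn m)).eq.symm
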